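/- Let n ≥ 5 be odd and α_0,...,α_{n-1} ∈ (0,π) with ∑_{i=0}^{n-1}(π − α_i) = π. Let (u_0,...,u_{n-1}) be any spherical polygon in S² with d(u_{i−1}, u_i) = α_i (indices mod n). Then for every i, d(u_i, u_{i+2}) ≤ (π − α_{i+1}) + (π − α_{i+2}), and consequently the 'star' polygon (u_0, u_2, u_4, ..., u_{n-1}, u_1, u_3, ..., u_{n-2}) has total spherical length at most 2π. -/

import Mathlib

open Real
open scoped RealInnerProductSpace

/-- The spherical (geodesic) distance between unit vectors. -/
noncomputable def sdist (u v : EuclideanSpace ℝ (Fin 3)) : ℝ :=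
  Real.arccos ⟪u, v⟫

lemma arccos_antitone : Antitone Real.arccos := fun x y h => by
  unfold Real.arccos
  simp only [sub_le_sub_iff_left]
  exact Real.monotone_arcsin h

lemma sdist_triangle (u v w : EuclideanSpace ℝ (Fin 3)) (hu : ‖u‖ = 1) (hv : ‖v‖ = 1)
    (hw : ‖w‖ = 1) : sdist u w ≤ sdist u v + sdist v w := by
  have habs : ∀ (x y : EuclideanSpace ℝ (Fin 3)), ‖x‖ = 1 → ‖y‖ = 1 →
      ⟪x, y⟫ ∈ Set.Icc (-1 : ℝ) 1 := fun x y hx hy => by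
    have := abs_real_inner_le_norm x y
    rw [hx, hy] at this
    constructor <;> nlinarith [abs_nonneg ⟪x, y⟫, le_abs_self ⟪x, y⟫, neg_abs_le ⟪x, y⟫]
  obtain ⟨h1, h2⟩ := habs u v hu hv
  obtain ⟨h3, h4⟩ := habs v w hv hw
  obtain ⟨h5, h6⟩ := habs u w hu hw
  set a := sdist u v with ha
  set b := sdist v w with hb
  have hvv : ⟪v, v⟫ = (1 : ℝ) := by
    rw [real_inner_self_eq_norm_sq, hv]; norm_num
  -- Cauchy-Schwarz on projections orthogonal to v
  have key : ⟪u, v⟫ * ⟪v, w⟫ - Real.sqrt (1 - ⟪u, v⟫ ^ 2) * Real.sqrt (1 - ⟪v, w⟫ ^ 2)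
      ≤ ⟪u, w⟫ := by
    set x := u - ⟪u, v⟫ • v with hx
    set y := w - ⟪v, w⟫ • v with hy
    have hxy : ⟪x, y⟫ = ⟪u, w⟫ - ⟪u, v⟫ * ⟪v, w⟫ := by
      simp only [hx, hy, inner_sub_left, inner_sub_right, real_inner_smul_left,
        real_inner_smul_right, hvv]
      ring_nf
    have hxx : ‖x‖ ^ 2 = 1 - ⟪u, v⟫ ^ 2 := by
      rw [← real_inner_self_eq_norm_sq]
      simp only [hx, inner_sub_left, inner_sub_right, real_inner_smul_left,
        real_inner_smul_right, hvv]
      rw [real_inner_comm v u, real_inner_self_eq_norm_sq, hu]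
      ring
    have hyy : ‖y‖ ^ 2 = 1 - ⟪v, w⟫ ^ 2 := by
      rw [← real_inner_self_eq_norm_sq]
      simp only [hy, inner_sub_left, inner_sub_right, real_inner_smul_left,
        real_inner_smul_right, hvv]
      rw [real_inner_comm v w, real_inner_self_eq_norm_sq, hw]
      ring
    have hcs := abs_real_inner_le_norm x y
    have hnx : ‖x‖ = Real.sqrt (1 - ⟪u, v⟫ ^ 2) := by
      rw [← hxx]; exact (Real.sqrt_sq (norm_nonneg x)).symm
    have hny : ‖y‖ = Real.sqrt (1 - ⟪v, w⟫ ^ 2) := by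
      rw [← hyy]; exact (Real.sqrt_sq (norm_nonneg y)).symm
    rw [hxy, hnx, hny] at hcs
    nlinarith [neg_abs_le (⟪u, w⟫ - ⟪u, v⟫ * ⟪v, w⟫)]
  have hcosab : Real.cos (a + b) ≤ ⟪u, w⟫ := by
    rw [Real.cos_add]
    have hca : Real.cos a = ⟪u, v⟫ := Real.cos_arccos h1 h2
    have hcb : Real.cos b = ⟪v, w⟫ := Real.cos_arccos h3 h4
    have hsa : Real.sin a = Real.sqrt (1 - ⟪u, v⟫ ^ 2) := Real.sin_arccos _
    have hsb : Real.sin b = Real.sqrt (1 - ⟪v, w⟫ ^ 2) := Real.sin_arccos _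
    rw [hca, hcb, hsa, hsb]; exact key
  by_cases hab : a + b ≤ π
  · have h0 : 0 ≤ a + b := add_nonneg (Real.arccos_nonneg _) (Real.arccos_nonneg _)
    calc sdist u w = Real.arccos ⟪u, w⟫ := rfl
      _ ≤ Real.arccos (Real.cos (a + b)) := arccos_antitone hcosab
      _ = a + b := Real.arccos_cos h0 hab
  · exact le_trans (Real.arccos_le_pi _) (le_of_not_ge hab)

/-- Let `n ≥ 5` be odd and `α i ∈ (0,π)` with `∑ (π - α i) = π`. For every spherical
polygon `u` with `sdist (u (i-1)) (u i) = α i`, the diagonals satisfy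
`sdist (u i) (u (i+2)) ≤ (π - α (i+1)) + (π - α (i+2))`, and consequently the star
polygon visiting every second vertex has total spherical length at most `2π`. -/
theorem star_polygon_length_le_two_pi {n : ℕ} [NeZero n] (hn : 5 ≤ n) (hodd : Odd n)
    (α : Fin n → ℝ) (hα : ∀ i : Fin n, α i ∈ Set.Ioo 0 π)
    (hsum : ∑ i : Fin n, (π - α i) = π)
    (u : Fin n → EuclideanSpace ℝ (Fin 3)) (hu : ∀ i : Fin n, ‖u i‖ = 1)
    (hd : ∀ i : Fin n, sdist (u (i - 1)) (u i) = α i) :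
    (∀ i : Fin n,
      sdist (u i) (u (i + 2)) ≤ (π - α (i + 1)) + (π - α (i + 2))) ∧
    ∑ i : Fin n, sdist (u i) (u (i + 2)) ≤ 2 * π := by
  have hedge : ∀ i : Fin n, sdist (u i) (u (i + 1)) = α (i + 1) := fun i => by
    have := hd (i + 1); rwa [add_sub_cancel_right] at this
  have hdiag : ∀ i : Fin n,
      sdist (u i) (u (i + 2)) ≤ (π - α (i + 1)) + (π - α (i + 2)) := by
    intro i
    have hnegv : ‖-u (i + 1)‖ = 1 := by rw [norm_neg]; exact hu _
    have htri := sdist_triangle (u i) (-u (i + 1)) (u (i + 2)) (hu _) hnegv (hu _)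
    have e1 : sdist (u i) (-u (i + 1)) = π - α (i + 1) := by
      unfold sdist
      rw [inner_neg_right, Real.arccos_neg]
      rw [← hedge i]; rfl
    have e2 : sdist (-u (i + 1)) (u (i + 2)) = π - α (i + 2) := by
      unfold sdist
      rw [inner_neg_left, Real.arccos_neg]
      have : sdist (u (i + 1)) (u (i + 1 + 1)) = α (i + 1 + 1) := hedge (i + 1)
      rw [add_assoc] at this
      norm_num at this ⊢
      have h2 : (i + (1 + 1) : Fin n) = i + 2 := by congr 1; simp [Fin.ext_iff, Fin.val_add]
      rw [h2] at this
      rw [← this]; rfl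
    rw [e1, e2] at htri
    exact htri
  refine ⟨hdiag, ?_⟩
  calc ∑ i : Fin n, sdist (u i) (u (i + 2))
      ≤ ∑ i : Fin n, ((π - α (i + 1)) + (π - α (i + 2))) :=
        Finset.sum_le_sum fun i _ => hdiag i
    _ = (∑ i : Fin n, (π - α (i + 1))) + ∑ i : Fin n, (π - α (i + 2)) :=
        Finset.sum_add_distrib
    _ = π + π := by
        have e1 : ∑ i : Fin n, (π - α (i + 1)) = π := by
          conv_rhs => rw [← hsum]
          exact Equiv.sum_comp (Equiv.addRight 1) fun i => π - α i
        have e2 : ∑ i : Fin n, (π - α (i + 2)) = π := by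
          conv_rhs => rw [← hsum]
          exact Equiv.sum_comp (Equiv.addRight 2) fun i => π - α i
        rw [e1, e2]
    _ = 2 * π := by ring
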